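/- On the phase space ℝ⁴ⁿ × ℝ⁴ⁿ (n quadruples (Qᵢ, Pᵢ)) with canonical Poisson bracket, the real span of the quadratic functions Qᵢᵀ Qⱼ, Pᵢᵀ Pⱼ, Qᵢᵀ Pⱼ, Qᵢᵀ K Qⱼ, Pᵢᵀ K Pⱼ, Qᵢᵀ K Pⱼ (1 ≤ i, j ≤ n, K the 4×4 skew matrix above) is closed under the Poisson bracket and has dimension (2n)², e.g. for n = 3 it is 36-dimensional. -/

import Mathlib

open Matrix

noncomputable section

abbrev PhaseN (n : ℕ) := (Fin n → Fin 4 → ℝ) × (Fin n → Fin 4 → ℝ)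

/-- Canonical Poisson bracket on T*ℝ⁴ⁿ. -/
def pb {n : ℕ} (f g : PhaseN n → ℝ) (z : PhaseN n) : ℝ :=
  ∑ i : Fin n, ∑ a : Fin 4,
    (fderiv ℝ f z (Pi.single i (Pi.single a 1), 0) *
       fderiv ℝ g z (0, Pi.single i (Pi.single a 1))
      - fderiv ℝ f z (0, Pi.single i (Pi.single a 1)) *
       fderiv ℝ g z (Pi.single i (Pi.single a 1), 0))

def Kmat : Matrix (Fin 4) (Fin 4) ℝ :=
  !![0,0,0,-1; 0,0,1,0; 0,-1,0,0; 1,0,0,0]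

/-- The quadratic invariants of the n-body problem. -/
def invariants (n : ℕ) : Set (PhaseN n → ℝ) :=
  {f | ∃ i j : Fin n,
    f = (fun z => z.1 i ⬝ᵥ z.1 j) ∨
    f = (fun z => z.2 i ⬝ᵥ z.2 j) ∨
    f = (fun z => z.1 i ⬝ᵥ z.2 j) ∨
    f = (fun z => z.1 i ⬝ᵥ (Kmat *ᵥ z.1 j)) ∨
    f = (fun z => z.2 i ⬝ᵥ (Kmat *ᵥ z.2 j)) ∨
    f = (fun z => z.1 i ⬝ᵥ (Kmat *ᵥ z.2 j))}

namespace NBody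

variable {n : ℕ}

abbrev Rho (n : ℕ) := Fin n ⊕ Fin n

/-- All 2n four-vectors of a phase point. -/
def Zf (z : PhaseN n) : Rho n → Fin 4 → ℝ := Sum.elim z.1 z.2

def Nmat : Matrix (Fin 4) (Fin 4) ℝ := 1 + Kmat

@[simp] lemma K00 : Kmat 0 0 = (0:ℝ) := rfl
@[simp] lemma K01 : Kmat 0 1 = (0:ℝ) := rfl
@[simp] lemma K02 : Kmat 0 2 = (0:ℝ) := rfl
@[simp] lemma K03 : Kmat 0 3 = (-1:ℝ) := rfl
@[simp] lemma K10 : Kmat 1 0 = (0:ℝ) := rfl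
@[simp] lemma K11 : Kmat 1 1 = (0:ℝ) := rfl
@[simp] lemma K12 : Kmat 1 2 = (1:ℝ) := rfl
@[simp] lemma K13 : Kmat 1 3 = (0:ℝ) := rfl
@[simp] lemma K20 : Kmat 2 0 = (0:ℝ) := rfl
@[simp] lemma K21 : Kmat 2 1 = (-1:ℝ) := rfl
@[simp] lemma K22 : Kmat 2 2 = (0:ℝ) := rfl
@[simp] lemma K23 : Kmat 2 3 = (0:ℝ) := rfl
@[simp] lemma K30 : Kmat 3 0 = (1:ℝ) := rfl
@[simp] lemma K31 : Kmat 3 1 = (0:ℝ) := rfl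
@[simp] lemma K32 : Kmat 3 2 = (0:ℝ) := rfl
@[simp] lemma K33 : Kmat 3 3 = (0:ℝ) := rfl
@[simp] lemma N00 : Nmat 0 0 = (1:ℝ) := by simp [Nmat, Matrix.add_apply, Matrix.one_apply]
@[simp] lemma N01 : Nmat 0 1 = (0:ℝ) := by simp [Nmat, Matrix.add_apply, Matrix.one_apply]
@[simp] lemma N02 : Nmat 0 2 = (0:ℝ) := by simp [Nmat, Matrix.add_apply, Matrix.one_apply]
@[simp] lemma N03 : Nmat 0 3 = (-1:ℝ) := by simp [Nmat, Matrix.add_apply, Matrix.one_apply]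
@[simp] lemma N10 : Nmat 1 0 = (0:ℝ) := by simp [Nmat, Matrix.add_apply, Matrix.one_apply]
@[simp] lemma N11 : Nmat 1 1 = (1:ℝ) := by simp [Nmat, Matrix.add_apply, Matrix.one_apply]
@[simp] lemma N12 : Nmat 1 2 = (1:ℝ) := by simp [Nmat, Matrix.add_apply, Matrix.one_apply]
@[simp] lemma N13 : Nmat 1 3 = (0:ℝ) := by simp [Nmat, Matrix.add_apply, Matrix.one_apply]
@[simp] lemma N20 : Nmat 2 0 = (0:ℝ) := by simp [Nmat, Matrix.add_apply, Matrix.one_apply]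
@[simp] lemma N21 : Nmat 2 1 = (-1:ℝ) := by simp [Nmat, Matrix.add_apply, Matrix.one_apply]
@[simp] lemma N22 : Nmat 2 2 = (1:ℝ) := by simp [Nmat, Matrix.add_apply, Matrix.one_apply]
@[simp] lemma N23 : Nmat 2 3 = (0:ℝ) := by simp [Nmat, Matrix.add_apply, Matrix.one_apply]
@[simp] lemma N30 : Nmat 3 0 = (1:ℝ) := by simp [Nmat, Matrix.add_apply, Matrix.one_apply]
@[simp] lemma N31 : Nmat 3 1 = (0:ℝ) := by simp [Nmat, Matrix.add_apply, Matrix.one_apply]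
@[simp] lemma N32 : Nmat 3 2 = (0:ℝ) := by simp [Nmat, Matrix.add_apply, Matrix.one_apply]
@[simp] lemma N33 : Nmat 3 3 = (1:ℝ) := by simp [Nmat, Matrix.add_apply, Matrix.one_apply]

/-- Quadratic function attached to a (2n)×(2n) coefficient matrix. -/
def Ff (A : Matrix (Rho n) (Rho n) ℝ) : PhaseN n → ℝ :=
  fun z => ∑ j, ∑ k, A j k * (Zf z j ⬝ᵥ (Nmat *ᵥ Zf z k))

lemma Zf_apply_add (z w : PhaseN n) (j : Rho n) : Zf (z + w) j = Zf z j + Zf w j := by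
  cases j <;> rfl

lemma Zf_apply_smul (c : ℝ) (z : PhaseN n) (j : Rho n) : Zf (c • z) j = c • Zf z j := by
  cases j <;> rfl

/-- Coordinate functions as continuous linear maps. -/
def clL (j : Rho n) (a : Fin 4) : PhaseN n →ₗ[ℝ] ℝ where
  toFun z := Zf z j a
  map_add' z w := by cases j <;> rfl
  map_smul' c z := by cases j <;> rfl

def cl (j : Rho n) (a : Fin 4) : PhaseN n →L[ℝ] ℝ := (clL j a).toContinuousLinearMap

@[simp] lemma cl_apply (j : Rho n) (a : Fin 4) (z : PhaseN n) : cl j a z = Zf z j a := rfl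

lemma Ff_eq (A : Matrix (Rho n) (Rho n) ℝ) (z : PhaseN n) :
    Ff A z = ∑ j, ∑ k, ∑ a, ∑ b, (A j k * Nmat a b) * (cl j a z * cl k b z) := by
  unfold Ff
  refine Finset.sum_congr rfl fun j _ => Finset.sum_congr rfl fun k _ => ?_
  simp only [dotProduct, mulVec, Finset.mul_sum, cl_apply]
  refine Finset.sum_congr rfl fun a _ => Finset.sum_congr rfl fun b _ => ?_
  ring

/-- Derivative of `Ff A` at `z`. -/
def DA (A : Matrix (Rho n) (Rho n) ℝ) (z : PhaseN n) : PhaseN n →L[ℝ] ℝ :=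
  ∑ j, ∑ k, ∑ a, ∑ b, (A j k * Nmat a b) • (cl j a z • cl k b + cl k b z • cl j a)

lemma hasFDerivAt_Ff (A : Matrix (Rho n) (Rho n) ℝ) (z : PhaseN n) :
    HasFDerivAt (Ff A) (DA A z) z := by
  have h : Ff A = fun z' => ∑ j, ∑ k, ∑ a, ∑ b,
      (A j k * Nmat a b) * (cl j a z' * cl k b z') := funext fun z' => Ff_eq A z'
  rw [h]
  unfold DA
  apply HasFDerivAt.fun_sum; intro j _
  apply HasFDerivAt.fun_sum; intro k _
  apply HasFDerivAt.fun_sum; intro a _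
  apply HasFDerivAt.fun_sum; intro b _
  exact (((cl j a).hasFDerivAt.mul (cl k b).hasFDerivAt)).const_mul _

/-- Gradient coordinates. -/
def gZ (A : Matrix (Rho n) (Rho n) ℝ) (z : PhaseN n) (m : Rho n) (a : Fin 4) : ℝ :=
  ∑ k, ∑ b, (A m k * Nmat a b * Zf z k b + A k m * Nmat b a * Zf z k b)

lemma Zf_single_Q (i : Fin n) (x : Fin 4 → ℝ) :
    Zf ((Pi.single i x : Fin n → Fin 4 → ℝ), (0 : Fin n → Fin 4 → ℝ))
      = Pi.single (Sum.inl i) x := by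
  funext j
  cases j with
  | inl i' => simp [Zf, Pi.single_apply]
  | inr i' => simp [Zf, Pi.single_apply]

lemma Zf_single_P (i : Fin n) (x : Fin 4 → ℝ) :
    Zf ((0 : Fin n → Fin 4 → ℝ), (Pi.single i x : Fin n → Fin 4 → ℝ))
      = Pi.single (Sum.inr i) x := by
  funext j
  cases j with
  | inl i' => simp [Zf, Pi.single_apply]
  | inr i' => simp [Zf, Pi.single_apply]

lemma DA_single (A : Matrix (Rho n) (Rho n) ℝ) (z : PhaseN n) (m : Rho n) (a : Fin 4)
    (v : PhaseN n) (hv : Zf v = Pi.single m (Pi.single a 1)) :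
    DA A z v = gZ A z m a := by
  have hvv : ∀ (j : Rho n) (a' : Fin 4),
      Zf v j a' = if j = m then (if a' = a then 1 else 0) else 0 := by
    intro j a'; rw [hv]; simp [Pi.single_apply, ite_apply]
  simp only [DA, ContinuousLinearMap.coe_sum', Finset.sum_apply, ContinuousLinearMap.add_apply,
    ContinuousLinearMap.smul_apply, cl_apply, smul_eq_mul, hvv, mul_ite, mul_zero, mul_one,
    ite_mul, zero_mul, mul_add, Finset.sum_add_distrib, Finset.sum_ite_irrel,
    Finset.sum_const_zero, Finset.sum_ite_eq', Finset.mem_univ, if_true, gZ]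
  ring

lemma fderiv_Ff_Q (A : Matrix (Rho n) (Rho n) ℝ) (z : PhaseN n) (i : Fin n) (a : Fin 4) :
    fderiv ℝ (Ff A) z (Pi.single i (Pi.single a 1), 0) = gZ A z (Sum.inl i) a := by
  rw [(hasFDerivAt_Ff A z).fderiv]
  exact DA_single A z _ a _ (Zf_single_Q i (Pi.single a 1))

lemma fderiv_Ff_P (A : Matrix (Rho n) (Rho n) ℝ) (z : PhaseN n) (i : Fin n) (a : Fin 4) :
    fderiv ℝ (Ff A) z (0, Pi.single i (Pi.single a 1)) = gZ A z (Sum.inr i) a := by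
  rw [(hasFDerivAt_Ff A z).fderiv]
  exact DA_single A z _ a _ (Zf_single_P i (Pi.single a 1))

lemma pb_Ff (A B : Matrix (Rho n) (Rho n) ℝ) (z : PhaseN n) :
    pb (Ff A) (Ff B) z = ∑ i : Fin n, ∑ a : Fin 4,
      (gZ A z (Sum.inl i) a * gZ B z (Sum.inr i) a
        - gZ A z (Sum.inr i) a * gZ B z (Sum.inl i) a) := by
  unfold pb
  refine Finset.sum_congr rfl fun i _ => Finset.sum_congr rfl fun a _ => ?_
  rw [fderiv_Ff_Q, fderiv_Ff_P, fderiv_Ff_Q, fderiv_Ff_P]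

def d1 (z : PhaseN n) (k k' : Rho n) : ℝ := Zf z k ⬝ᵥ Zf z k'

def d2 (z : PhaseN n) (k k' : Rho n) : ℝ := Zf z k ⬝ᵥ (Kmat *ᵥ Zf z k')

lemma dotN (u v : Fin 4 → ℝ) :
    u ⬝ᵥ (Nmat *ᵥ v) = u ⬝ᵥ v + u ⬝ᵥ (Kmat *ᵥ v) := by
  simp only [dotProduct, mulVec, Fin.sum_univ_four, K00, K01, K02, K03, K10, K11, K12, K13,
    K20, K21, K22, K23, K30, K31, K32, K33, N00, N01, N02, N03, N10, N11, N12, N13,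
    N20, N21, N22, N23, N30, N31, N32, N33]
  ring

lemma d1_comm (z : PhaseN n) (k k' : Rho n) : d1 z k' k = d1 z k k' := dotProduct_comm _ _

lemma d2_skew (z : PhaseN n) (k k' : Rho n) : d2 z k' k = - d2 z k k' := by
  simp only [d2, dotProduct, mulVec, Fin.sum_univ_four, K00, K01, K02, K03, K10, K11, K12, K13,
    K20, K21, K22, K23, K30, K31, K32, K33]
  ring

lemma sum_mul_sum_swap (u v : Rho n → Fin 4 → ℝ) :
    ∑ a : Fin 4, (∑ k, u k a) * (∑ k', v k' a) = ∑ k, ∑ k', ∑ a, u k a * v k' a := by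
  simp only [Finset.sum_mul_sum]
  rw [Finset.sum_comm]
  exact Finset.sum_congr rfl fun k _ => Finset.sum_comm

set_option maxHeartbeats 1600000 in
lemma grad_dot (A B : Matrix (Rho n) (Rho n) ℝ) (z : PhaseN n) (m m' : Rho n) :
    ∑ a : Fin 4, gZ A z m a * gZ B z m' a
      = ∑ k, ∑ k', ((2*(A m k * B m' k' + A k m * B k' m')) * d1 z k k'
          + (2*(A k m * B m' k' - A m k * B k' m')) * d2 z k k') := by
  unfold gZ
  rw [sum_mul_sum_swap (n := n)
    (fun k a => ∑ b, (A m k * Nmat a b * Zf z k b + A k m * Nmat b a * Zf z k b))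
    (fun k' a => ∑ b, (B m' k' * Nmat a b * Zf z k' b + B k' m' * Nmat b a * Zf z k' b))]
  refine Finset.sum_congr rfl fun k _ => Finset.sum_congr rfl fun k' _ => ?_
  simp only [d1, d2, dotProduct, mulVec, Fin.sum_univ_four, K00, K01, K02, K03, K10, K11,
    K12, K13, K20, K21, K22, K23, K30, K31, K32, K33, N00, N01, N02, N03, N10, N11, N12, N13,
    N20, N21, N22, N23, N30, N31, N32, N33]
  ring

def c1e (A B : Matrix (Rho n) (Rho n) ℝ) (k k' : Rho n) : ℝ :=
  ∑ i : Fin n,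
    (2*(A (Sum.inl i) k * B (Sum.inr i) k' + A k (Sum.inl i) * B k' (Sum.inr i))
      - 2*(A (Sum.inr i) k * B (Sum.inl i) k' + A k (Sum.inr i) * B k' (Sum.inl i)))

def c2e (A B : Matrix (Rho n) (Rho n) ℝ) (k k' : Rho n) : ℝ :=
  ∑ i : Fin n,
    (2*(A k (Sum.inl i) * B (Sum.inr i) k' - A (Sum.inl i) k * B k' (Sum.inr i))
      - 2*(A k (Sum.inr i) * B (Sum.inl i) k' - A (Sum.inr i) k * B k' (Sum.inl i)))

lemma pb_Ff' (A B : Matrix (Rho n) (Rho n) ℝ) (z : PhaseN n) :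
    pb (Ff A) (Ff B) z
      = ∑ k, ∑ k', (c1e A B k k' * d1 z k k' + c2e A B k k' * d2 z k k') := by
  rw [pb_Ff]
  have step : ∀ i : Fin n,
      (∑ a : Fin 4, (gZ A z (Sum.inl i) a * gZ B z (Sum.inr i) a
        - gZ A z (Sum.inr i) a * gZ B z (Sum.inl i) a))
      = ∑ k, ∑ k',
          (((2*(A (Sum.inl i) k * B (Sum.inr i) k' + A k (Sum.inl i) * B k' (Sum.inr i))) * d1 z k k'
            + (2*(A k (Sum.inl i) * B (Sum.inr i) k' - A (Sum.inl i) k * B k' (Sum.inr i))) * d2 z k k')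
          - (((2*(A (Sum.inr i) k * B (Sum.inl i) k' + A k (Sum.inr i) * B k' (Sum.inl i))) * d1 z k k'
            + (2*(A k (Sum.inr i) * B (Sum.inl i) k' - A (Sum.inr i) k * B k' (Sum.inl i))) * d2 z k k'))) := by
    intro i
    rw [Finset.sum_sub_distrib, grad_dot, grad_dot, ← Finset.sum_sub_distrib]
    exact Finset.sum_congr rfl fun k _ => (Finset.sum_sub_distrib _ _).symm
  simp only [step]
  rw [Finset.sum_comm]
  refine Finset.sum_congr rfl fun k _ => ?_
  rw [Finset.sum_comm]
  refine Finset.sum_congr rfl fun k' _ => ?_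
  simp only [c1e, c2e, Finset.sum_mul, ← Finset.sum_add_distrib]
  exact Finset.sum_congr rfl fun i _ => by ring

def brk (A B : Matrix (Rho n) (Rho n) ℝ) : Matrix (Rho n) (Rho n) ℝ :=
  Matrix.of fun k k' =>
    (c1e A B k k' + c1e A B k' k + c2e A B k k' - c2e A B k' k) / 2

lemma dadd (f g : Rho n → Rho n → ℝ) :
    (∑ k, ∑ k', (f k k' + g k k')) = (∑ k, ∑ k', f k k') + (∑ k, ∑ k', g k k') := by
  simp [Finset.sum_add_distrib]

lemma dsub (f g : Rho n → Rho n → ℝ) :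
    (∑ k, ∑ k', (f k k' - g k k')) = (∑ k, ∑ k', f k k') - (∑ k, ∑ k', g k k') := by
  simp [Finset.sum_sub_distrib]

lemma Ff_brk (A B : Matrix (Rho n) (Rho n) ℝ) (z : PhaseN n) :
    Ff (brk A B) z
      = ∑ k, ∑ k', (c1e A B k k' * d1 z k k' + c2e A B k k' * d2 z k k') := by
  have h1 : (∑ k, ∑ k', c1e A B k' k * (d1 z k k' + d2 z k k'))
      = ∑ k, ∑ k', c1e A B k k' * (d1 z k k' - d2 z k k') := by
    rw [Finset.sum_comm]
    exact Finset.sum_congr rfl fun k _ => Finset.sum_congr rfl fun k' _ => by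
      rw [d1_comm, d2_skew]; ring
  have h2 : (∑ k, ∑ k', c2e A B k' k * (d1 z k k' + d2 z k k'))
      = ∑ k, ∑ k', c2e A B k k' * (d1 z k k' - d2 z k k') := by
    rw [Finset.sum_comm]
    exact Finset.sum_congr rfl fun k _ => Finset.sum_congr rfl fun k' _ => by
      rw [d1_comm, d2_skew]; ring
  unfold Ff brk
  have key : ∀ k k' : Rho n, Zf z k ⬝ᵥ (Nmat *ᵥ Zf z k') = d1 z k k' + d2 z k k' :=
    fun k k' => dotN _ _
  simp only [Matrix.of_apply, key]
  apply mul_left_cancel₀ (two_ne_zero (α := ℝ))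
  simp only [Finset.mul_sum]
  have e : ∀ k k' : Rho n,
      2 * ((c1e A B k k' + c1e A B k' k + c2e A B k k' - c2e A B k' k) / 2
          * (d1 z k k' + d2 z k k'))
        = c1e A B k k' * (d1 z k k' + d2 z k k')
          + (c1e A B k' k * (d1 z k k' + d2 z k k')
          + (c2e A B k k' * (d1 z k k' + d2 z k k')
            - c2e A B k' k * (d1 z k k' + d2 z k k'))) := fun _ _ => by ring
  simp only [e]
  rw [dadd, dadd, dsub, h1, h2, ← dsub, ← dadd, ← dadd]
  exact Finset.sum_congr rfl fun k _ => Finset.sum_congr rfl fun k' _ => by ring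

lemma pb_Ff_eq (A B : Matrix (Rho n) (Rho n) ℝ) :
    pb (Ff A) (Ff B) = Ff (brk A B) :=
  funext fun z => by rw [pb_Ff', Ff_brk]

/-- `Ff` as a linear map. -/
def Fl : Matrix (Rho n) (Rho n) ℝ →ₗ[ℝ] (PhaseN n → ℝ) where
  toFun := Ff
  map_add' A B := by
    funext z
    simp [Ff, Matrix.add_apply, add_mul, Finset.sum_add_distrib]
  map_smul' c A := by
    funext z
    simp only [Pi.smul_apply, smul_eq_mul, Ff, Finset.mul_sum, Matrix.smul_apply, RingHom.id_apply]
    exact Finset.sum_congr rfl fun j _ => Finset.sum_congr rfl fun k _ => by ring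

lemma collapse (X : Rho n → Rho n → ℝ) (j k : Rho n) :
    ∑ j', ∑ k', (if j' = j then (if k' = k then (1:ℝ) else 0) else 0) * X j' k' = X j k := by
  simp [ite_mul, zero_mul, one_mul, Finset.sum_ite_eq', Finset.sum_ite_irrel,
    Finset.sum_const_zero]

lemma Nsym (u v : Fin 4 → ℝ) :
    u ⬝ᵥ (Nmat *ᵥ v) + v ⬝ᵥ (Nmat *ᵥ u) = 2 * (u ⬝ᵥ v) := by
  simp only [dotProduct, mulVec, Fin.sum_univ_four, N00, N01, N02, N03, N10, N11, N12, N13,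
    N20, N21, N22, N23, N30, N31, N32, N33]
  ring

lemma NskewL (u v : Fin 4 → ℝ) :
    u ⬝ᵥ (Nmat *ᵥ v) - v ⬝ᵥ (Nmat *ᵥ u) = 2 * (u ⬝ᵥ (Kmat *ᵥ v)) := by
  simp only [dotProduct, mulVec, Fin.sum_univ_four, K00, K01, K02, K03, K10, K11, K12, K13,
    K20, K21, K22, K23, K30, K31, K32, K33, N00, N01, N02, N03, N10, N11, N12, N13,
    N20, N21, N22, N23, N30, N31, N32, N33]
  ring

lemma Kswap (u v : Fin 4 → ℝ) : v ⬝ᵥ (Kmat *ᵥ u) = -(u ⬝ᵥ (Kmat *ᵥ v)) := by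
  simp only [dotProduct, mulVec, Fin.sum_univ_four, K00, K01, K02, K03, K10, K11, K12, K13,
    K20, K21, K22, K23, K30, K31, K32, K33]
  ring

lemma L1 (j k : Rho n) : (fun z : PhaseN n => Zf z j ⬝ᵥ Zf z k)
    = Ff (Matrix.of fun j' k' =>
        ((if j' = j then (if k' = k then (1:ℝ) else 0) else 0)
          + (if j' = k then (if k' = j then 1 else 0) else 0)) / 2) := by
  funext z
  unfold Ff
  simp only [Matrix.of_apply, add_div, add_mul, div_mul_eq_mul_div, Finset.sum_add_distrib,
    ← Finset.sum_div]
  rw [collapse, collapse]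
  have := Nsym (Zf z j) (Zf z k)
  linarith

lemma L2 (j k : Rho n) : (fun z : PhaseN n => Zf z j ⬝ᵥ (Kmat *ᵥ Zf z k))
    = Ff (Matrix.of fun j' k' =>
        ((if j' = j then (if k' = k then (1:ℝ) else 0) else 0)
          - (if j' = k then (if k' = j then 1 else 0) else 0)) / 2) := by
  funext z
  unfold Ff
  simp only [Matrix.of_apply, sub_div, sub_mul, div_mul_eq_mul_div, Finset.sum_sub_distrib,
    ← Finset.sum_div]
  rw [collapse, collapse]
  have := NskewL (Zf z j) (Zf z k)
  linarith

lemma span_eq : Submodule.span ℝ (invariants n) = LinearMap.range (Fl (n := n)) := by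
  apply le_antisymm
  · rw [Submodule.span_le]
    rintro f ⟨i, j, hf⟩
    rcases hf with h|h|h|h|h|h <;> subst h
    · exact ⟨_, (L1 (Sum.inl i) (Sum.inl j)).symm⟩
    · exact ⟨_, (L1 (Sum.inr i) (Sum.inr j)).symm⟩
    · exact ⟨_, (L1 (Sum.inl i) (Sum.inr j)).symm⟩
    · exact ⟨_, (L2 (Sum.inl i) (Sum.inl j)).symm⟩
    · exact ⟨_, (L2 (Sum.inr i) (Sum.inr j)).symm⟩
    · exact ⟨_, (L2 (Sum.inl i) (Sum.inr j)).symm⟩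
  · rintro _ ⟨A, rfl⟩
    show Ff A ∈ _
    have hrepr : Ff A = ∑ j : Rho n, ∑ k : Rho n,
        A j k • (fun z : PhaseN n => Zf z j ⬝ᵥ (Nmat *ᵥ Zf z k)) := by
      funext z
      simp [Ff, Finset.sum_apply, Pi.smul_apply, smul_eq_mul]
    rw [hrepr]
    refine Submodule.sum_mem _ fun j _ => Submodule.sum_mem _ fun k _ =>
      Submodule.smul_mem _ _ ?_
    have hsplit : (fun z : PhaseN n => Zf z j ⬝ᵥ (Nmat *ᵥ Zf z k))
        = (fun z : PhaseN n => Zf z j ⬝ᵥ Zf z k)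
          + (fun z : PhaseN n => Zf z j ⬝ᵥ (Kmat *ᵥ Zf z k)) := by
      funext z
      exact dotN _ _
    rw [hsplit]
    refine Submodule.add_mem _ ?_ ?_
    · cases j with
      | inl i =>
        cases k with
        | inl i' => exact Submodule.subset_span ⟨i, i', Or.inl rfl⟩
        | inr i' => exact Submodule.subset_span ⟨i, i', Or.inr (Or.inr (Or.inl rfl))⟩
      | inr i =>
        cases k with
        | inl i' =>
          have hc : (fun z : PhaseN n => Zf z (Sum.inr i) ⬝ᵥ Zf z (Sum.inl i'))
              = (fun z : PhaseN n => z.1 i' ⬝ᵥ z.2 i) := by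
            funext z
            exact dotProduct_comm _ _
          rw [hc]
          exact Submodule.subset_span ⟨i', i, Or.inr (Or.inr (Or.inl rfl))⟩
        | inr i' => exact Submodule.subset_span ⟨i, i', Or.inr (Or.inl rfl)⟩
    · cases j with
      | inl i =>
        cases k with
        | inl i' => exact Submodule.subset_span ⟨i, i', Or.inr (Or.inr (Or.inr (Or.inl rfl)))⟩
        | inr i' =>
          exact Submodule.subset_span ⟨i, i', Or.inr (Or.inr (Or.inr (Or.inr (Or.inr rfl))))⟩
      | inr i =>
        cases k with
        | inl i' =>
          have hc : (fun z : PhaseN n => Zf z (Sum.inr i) ⬝ᵥ (Kmat *ᵥ Zf z (Sum.inl i')))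
              = (-1 : ℝ) • (fun z : PhaseN n => z.1 i' ⬝ᵥ (Kmat *ᵥ z.2 i)) := by
            funext z
            have := Kswap (z.1 i') (z.2 i)
            simp only [Pi.smul_apply, smul_eq_mul, neg_one_mul]
            exact this
          rw [hc]
          exact Submodule.smul_mem _ _ (Submodule.subset_span
            ⟨i', i, Or.inr (Or.inr (Or.inr (Or.inr (Or.inr rfl))))⟩)
        | inr i' =>
          exact Submodule.subset_span ⟨i, i', Or.inr (Or.inr (Or.inr (Or.inr (Or.inl rfl))))⟩

def zOf (v : Rho n → Fin 4 → ℝ) : PhaseN n :=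
  (fun i => v (Sum.inl i), fun i => v (Sum.inr i))

lemma Zf_zOf (v : Rho n → Fin 4 → ℝ) : Zf (zOf v) = v := by
  funext j
  cases j <;> rfl

def u0 : Fin 4 → ℝ := ![1,0,0,0]
def u3 : Fin 4 → ℝ := ![0,0,0,1]

lemma ite_dot (P : Prop) [Decidable P] (u w : Fin 4 → ℝ) :
    (if P then u else 0) ⬝ᵥ w = if P then u ⬝ᵥ w else 0 := by split <;> simp

lemma dot_mulVec_ite (P : Prop) [Decidable P] (w u : Fin 4 → ℝ) :
    w ⬝ᵥ (Nmat *ᵥ (if P then u else 0)) = if P then w ⬝ᵥ (Nmat *ᵥ u) else 0 := by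
  split <;> simp

lemma ev4 (A : Matrix (Rho n) (Rho n) ℝ) (hA : Ff A = 0) (k k' : Rho n) (u u' : Fin 4 → ℝ) :
    A k k * (u ⬝ᵥ (Nmat *ᵥ u)) + A k k' * (u ⬝ᵥ (Nmat *ᵥ u'))
      + A k' k * (u' ⬝ᵥ (Nmat *ᵥ u)) + A k' k' * (u' ⬝ᵥ (Nmat *ᵥ u')) = 0 := by
  have h := congrFun hA (zOf (fun j => (if j = k then u else 0) + (if j = k' then u' else 0)))
  simp only [Ff, Zf_zOf, Pi.zero_apply, Matrix.mulVec_add, dotProduct_add, add_dotProduct,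
    ite_dot, dot_mulVec_ite, mul_ite, mul_zero, mul_add, ite_mul, zero_mul,
    Finset.sum_add_distrib, Finset.sum_ite_irrel, Finset.sum_const_zero, Finset.sum_ite_eq',
    Finset.mem_univ, if_true] at h
  linear_combination h

lemma u_dots : u0 ⬝ᵥ (Nmat *ᵥ u0) = 1 ∧ u0 ⬝ᵥ (Nmat *ᵥ u3) = -1
    ∧ u3 ⬝ᵥ (Nmat *ᵥ u0) = 1 ∧ u3 ⬝ᵥ (Nmat *ᵥ u3) = 1 := by
  refine ⟨?_, ?_, ?_, ?_⟩ <;>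
    · simp only [dotProduct, mulVec, Fin.sum_univ_four, N00, N01, N02, N03, N10, N11, N12, N13,
        N20, N21, N22, N23, N30, N31, N32, N33, u0, u3]
      norm_num [Matrix.cons_val_three, Matrix.cons_val_two]

lemma Fl_inj : Function.Injective (Fl (n := n)) := by
  rw [injective_iff_map_eq_zero]
  intro A hA
  have hA' : Ff A = 0 := hA
  ext k k'
  have h1 := ev4 A hA' k k' u0 u0
  have h2 := ev4 A hA' k k' u0 u3
  obtain ⟨e1, e2, e3, e4⟩ := u_dots
  rw [e1] at h1 h2
  rw [e2, e3, e4] at h2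
  simp only [Matrix.zero_apply]
  linarith

end NBody

theorem invariants_span_closed_and_dim (n : ℕ) (hn : 0 < n) :
    (∀ f g, f ∈ Submodule.span ℝ (invariants n) → g ∈ Submodule.span ℝ (invariants n) →
      pb f g ∈ Submodule.span ℝ (invariants n)) ∧
    Module.finrank ℝ (Submodule.span ℝ (invariants n)) = (2 * n) ^ 2 := by
  constructor
  · intro f g hf hg
    rw [NBody.span_eq] at hf hg ⊢
    obtain ⟨A, rfl⟩ := hf
    obtain ⟨B, rfl⟩ := hg
    exact ⟨NBody.brk A B, (NBody.pb_Ff_eq A B).symm⟩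
  · rw [NBody.span_eq, LinearMap.finrank_range_of_inj NBody.Fl_inj, Module.finrank_matrix]
    simp only [Fintype.card_sum, Fintype.card_fin, Module.finrank_self, mul_one]
    ring

end
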